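/- Cancellation identity between the cross-derivative term and the selection drift (Appendix D): Fix K ≥ 2 and a symmetric matrix σ ∈ ℝ^{K×K} with σ_{K,K} = 0. For every continuously differentiable function f on (a neighborhood of) the interior of the simplex Δ_{K-1} and every x in the interior of Δ_{K-1}: Σ_{i,j=1}^{K-1} x_i (δ_{i,j} − x_j) [∂/∂x_i e^{−σ̄(x)/2}] [∂f/∂x_j (x)] + e^{−σ̄(x)/2} Σ_{i=1}^{K-1} x_i (σ_i(x) − σ̄(x)) ∂f/∂x_i (x) = 0. -/

import Mathlib

open MeasureTheory Filter

noncomputable section WrightFisher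

/-- The modified Jacobi polynomial `R_n^{(a,b)}`. -/
def modJacobi (a b : ℝ) (n : ℕ) (x : ℝ) : ℝ :=
  ∑ s ∈ Finset.range (n + 1),
    (Real.Gamma ((n : ℝ) + b) / (Real.Gamma ((n : ℝ) - (s : ℝ) + 1) * Real.Gamma (b + (s : ℝ)))) *
      (Real.Gamma ((n : ℝ) + a) / (Real.Gamma ((s : ℝ) + 1) * Real.Gamma (a + (n : ℝ) - (s : ℝ)))) *
      (x - 1) ^ s * x ^ (n - s)

/-- The norming constant `c_n^{(a,b)}`. -/
def cConst (a b : ℝ) (n : ℕ) : ℝ :=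
  Real.Gamma ((n : ℝ) + a) * Real.Gamma ((n : ℝ) + b) /
    ((2 * (n : ℝ) + a + b - 1) * Real.Gamma ((n : ℝ) + a + b - 1) * Real.Gamma ((n : ℝ) + 1))

/-- Inclusion of `Fin (K-1)` into `Fin K`. -/
def idx (K : ℕ) (j : Fin (K - 1)) : Fin K := Fin.castLE (Nat.sub_le K 1) j

/-- `N_j = Σ_{i>j} n_i`. -/
def Nsum (K : ℕ) (n : Fin (K - 1) → ℕ) (j : Fin (K - 1)) : ℕ :=
  ∑ i ∈ Finset.univ.filter (fun i => j < i), n i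

/-- `Θ_j = Σ_{i=j+1}^{K} θ_i` (0-indexed: sum of `θ i` for `i > j`). -/
def Tsum (K : ℕ) (θ : Fin K → ℝ) (j : Fin (K - 1)) : ℝ :=
  ∑ i ∈ Finset.univ.filter (fun i : Fin K => (j : ℕ) < (i : ℕ)), θ i

/-- `Σ_{i<j} x_i`. -/
def partialSum (K : ℕ) (x : Fin (K - 1) → ℝ) (j : Fin (K - 1)) : ℝ :=
  ∑ i ∈ Finset.univ.filter (fun i => i < j), x i

/-- The multivariate Jacobi polynomial `P_n^θ`. -/
def JacobiP (K : ℕ) (θ : Fin K → ℝ) (n : Fin (K - 1) → ℕ) (x : Fin (K - 1) → ℝ) : ℝ :=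
  ∏ j : Fin (K - 1),
    (1 - x j / (1 - partialSum K x j)) ^ (Nsum K n j) *
      modJacobi (θ (idx K j)) (Tsum K θ j + 2 * (Nsum K n j : ℝ)) (n j)
        (x j / (1 - partialSum K x j))

/-- Extend `x ∈ ℝ^{K-1}` to all `K` allele frequencies, `x_K := 1 - Σ x_i`. -/
def extendFreq (K : ℕ) (x : Fin (K - 1) → ℝ) (i : Fin K) : ℝ :=
  if h : (i : ℕ) < K - 1 then x ⟨i, h⟩ else 1 - ∑ j, x j

/-- The unnormalized Dirichlet density `Π_0`. -/
def Pi0 (K : ℕ) (θ : Fin K → ℝ) (x : Fin (K - 1) → ℝ) : ℝ :=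
  ∏ i : Fin K, extendFreq K x i ^ (θ i - 1)

/-- The norming constant `C_n^θ`. -/
def CConst (K : ℕ) (θ : Fin K → ℝ) (n : Fin (K - 1) → ℕ) : ℝ :=
  ∏ j : Fin (K - 1), cConst (θ (idx K j)) (Tsum K θ j + 2 * (Nsum K n j : ℝ)) (n j)

/-- Interior of the simplex `Δ_{K-1}`. -/
def simplexInt (K : ℕ) : Set (Fin (K - 1) → ℝ) :=
  {x | (∀ i, 0 < x i) ∧ ∑ i, x i < 1}

/-- Open unit cube `(0,1)^{K-1}`. -/
def openCube (K : ℕ) : Set (Fin (K - 1) → ℝ) :=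
  {ξ | ∀ i, ξ i ∈ Set.Ioo (0 : ℝ) 1}

/-- The stick-breaking map `T(ξ)_i = ξ_i Π_{j<i}(1-ξ_j)`. -/
def stickBreak (K : ℕ) (ξ : Fin (K - 1) → ℝ) : Fin (K - 1) → ℝ :=
  fun i => ξ i * ∏ j ∈ Finset.univ.filter (fun j => j < i), (1 - ξ j)

/-- Inverse of the stick-breaking map, `S(x)_i = x_i / (1 - Σ_{j<i} x_j)`. -/
def stickBreakInv (K : ℕ) (x : Fin (K - 1) → ℝ) : Fin (K - 1) → ℝ :=
  fun i => x i / (1 - partialSum K x i)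

/-- Partial derivative `∂f/∂x_i`. -/
def pd (K : ℕ) (f : (Fin (K - 1) → ℝ) → ℝ) (i : Fin (K - 1)) (x : Fin (K - 1) → ℝ) : ℝ :=
  fderiv ℝ f x (Pi.single i 1)

/-- `|θ| = Σ θ_i`. -/
def thetaTot (K : ℕ) (θ : Fin K → ℝ) : ℝ := ∑ i, θ i

/-- The neutral Wright-Fisher generator `L_0`. -/
def L0 (K : ℕ) (θ : Fin K → ℝ) (f : (Fin (K - 1) → ℝ) → ℝ) (x : Fin (K - 1) → ℝ) : ℝ :=
  (1 / 2) * ∑ i, ∑ j, x i * ((if i = j then (1 : ℝ) else 0) - x j) * pd K (pd K f j) i x +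
    (1 / 2) * ∑ i, (θ (idx K i) - thetaTot K θ * x i) * pd K f i x

/-- Marginal fitness `σ_i(x)`. -/
def margFit (K : ℕ) (σ : Fin K → Fin K → ℝ) (x : Fin (K - 1) → ℝ) (i : Fin K) : ℝ :=
  ∑ j, σ i j * extendFreq K x j

/-- Mean fitness `σ̄(x)`. -/
def meanFit (K : ℕ) (σ : Fin K → Fin K → ℝ) (x : Fin (K - 1) → ℝ) : ℝ :=
  ∑ i, ∑ j, σ i j * extendFreq K x i * extendFreq K x j

/-- The selection part `L_σ` of the generator. -/
def Lsel (K : ℕ) (σ : Fin K → Fin K → ℝ) (f : (Fin (K - 1) → ℝ) → ℝ)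
    (x : Fin (K - 1) → ℝ) : ℝ :=
  ∑ i, x i * (margFit K σ x (idx K i) - meanFit K σ x) * pd K f i x

/-- The full generator `L = L_0 + L_σ`. -/
def Lfull (K : ℕ) (θ : Fin K → ℝ) (σ : Fin K → Fin K → ℝ) (f : (Fin (K - 1) → ℝ) → ℝ)
    (x : Fin (K - 1) → ℝ) : ℝ :=
  L0 K θ f x + Lsel K σ f x

/-- The polynomial `Q(x; σ, θ)`. -/
def Qpoly (K : ℕ) (θ : Fin K → ℝ) (σ : Fin K → Fin K → ℝ) (x : Fin (K - 1) → ℝ) : ℝ :=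
  (1 / 2) * (∑ i, extendFreq K x i * margFit K σ x i ^ 2
    + ∑ i, θ i * margFit K σ x i
    + ∑ i, extendFreq K x i * σ i i
    - (1 + thetaTot K θ) * meanFit K σ x
    - meanFit K σ x ^ 2)

/-- Neutral eigenvalue `λ^θ_{|n|} = |n|(|n|-1+|θ|)/2`. -/
def lamNeutral (K : ℕ) (θ : Fin K → ℝ) (n : Fin (K - 1) → ℕ) : ℝ :=
  (1 / 2) * (∑ j, (n j : ℝ)) * ((∑ j, (n j : ℝ)) - 1 + thetaTot K θ)

/-- Recurrence constants `G^{(a,b)}_{n,m}`. -/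
def Gc (a b : ℝ) (n m : ℕ) : ℝ :=
  if n = m + 1 then
    ((n : ℝ) + a - 1) * ((n : ℝ) + b - 1) /
      ((2 * (n : ℝ) + a + b - 1) * (2 * (n : ℝ) + a + b - 2))
  else if n = m then
    (if n = 0 then a / (a + b)
     else 1 / 2 - (b - a) * (a + b - 2) / (2 * (2 * (n : ℝ) + a + b) * (2 * (n : ℝ) + a + b - 2)))
  else if m = n + 1 then
    ((n : ℝ) + 1) * ((n : ℝ) + a + b - 1) / ((2 * (n : ℝ) + a + b) * (2 * (n : ℝ) + a + b - 1))
  else 0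

/-- Recurrence constants `H^{(a,b)}_{n,m}`. -/
def Hc (a b : ℝ) (n m : ℕ) : ℝ :=
  if m = n then
    ((n : ℝ) + a + b - 1) * ((n : ℝ) + a + b) /
      ((2 * (n : ℝ) + a + b - 1) * (2 * (n : ℝ) + a + b))
  else if n = m + 1 then
    (if n = 1 then -2 * a / (a + b + 2)
     else if 1 < n then
       -2 * ((n : ℝ) + a - 1) * ((n : ℝ) + a + b - 1) /
         ((2 * (n : ℝ) + a + b - 2) * (2 * (n : ℝ) + a + b))
     else 0)
  else if n = m + 2 then
    (if 1 < n then
       ((n : ℝ) + a - 2) * ((n : ℝ) + a - 1) /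
         ((2 * (n : ℝ) + a + b - 2) * (2 * (n : ℝ) + a + b - 1))
     else 0)
  else 0

/-- Recurrence constants `I^{(a,b)}_{n,m}`. -/
def Ic (a b : ℝ) (n m : ℕ) : ℝ :=
  if m = n + 1 then
    (if n = 0 then -1 / (a + b)
     else -(((n : ℝ) + 1) * ((n : ℝ) + a + b - 1)) /
       ((2 * (n : ℝ) + a + b - 1) * (2 * (n : ℝ) + a + b)))
  else if m = n then
    (if n = 0 then b / (a + b)
     else if n = 1 then (b ^ 2 + a * (b + 2)) / ((a + b) * (a + b + 2))
     else (b ^ 2 + 2 * (n : ℝ) * ((n : ℝ) + a - 1) + b * (2 * (n : ℝ) + a - 2)) /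
       ((2 * (n : ℝ) + a + b - 2) * (2 * (n : ℝ) + a + b)))
  else if n = m + 1 then
    (if n = 1 then -(a * b) / ((a + b) * (a + b + 1))
     else -(((n : ℝ) + a - 1) * ((n : ℝ) + b - 1)) /
       ((2 * (n : ℝ) + a + b - 2) * (2 * (n : ℝ) + a + b - 1)))
  else 0

/-- Recurrence constants `J^{(a,b)}_{n,m}`. -/
def Jc (a b : ℝ) (n m : ℕ) : ℝ :=
  if m = n then
    (if n = 0 then (b - 1) * (b - 2) / ((a + b - 1) * (a + b - 2))
     else ((n : ℝ) + b - 2) * ((n : ℝ) + b - 1) /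
       ((2 * (n : ℝ) + a + b - 2) * (2 * (n : ℝ) + a + b - 1)))
  else if m = n + 1 then
    -2 * ((n : ℝ) + 1) * ((n : ℝ) + b - 1) / ((2 * (n : ℝ) + a + b - 2) * (2 * (n : ℝ) + a + b))
  else if m = n + 2 then
    ((n : ℝ) + 1) * ((n : ℝ) + 2) / ((2 * (n : ℝ) + a + b - 1) * (2 * (n : ℝ) + a + b))
  else 0

/-- The index set `M_i(n)`. -/
def indexSet (K : ℕ) (i : Fin (K - 1)) (n : Fin (K - 1) → ℕ) : Set (Fin (K - 1) → ℕ) :=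
  {m | (∀ j, i < j → Nsum K m j = Nsum K n j) ∧
       (∀ j, j ≤ i → |(Nsum K m j : ℤ) - (Nsum K n j : ℤ)| ≤ 1)}

/-- The explicit recurrence coefficient `r^{(θ,i)}_{n,m}`. -/
def rCoeff (K : ℕ) (θ : Fin K → ℝ) (i : Fin (K - 1)) (n m : Fin (K - 1) → ℕ) : ℝ :=
  Gc (θ (idx K i)) (Tsum K θ i + 2 * (Nsum K n i : ℝ)) (n i) (m i) *
    ∏ j ∈ Finset.univ.filter (fun j => j < i),
      (if Nsum K m j = Nsum K n j + 1 then
         Hc (θ (idx K j)) (Tsum K θ j + 2 * (Nsum K n j : ℝ)) (n j) (m j)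
       else if Nsum K m j = Nsum K n j then
         Ic (θ (idx K j)) (Tsum K θ j + 2 * (Nsum K n j : ℝ)) (n j) (m j)
       else if Nsum K n j = Nsum K m j + 1 then
         Jc (θ (idx K j)) (Tsum K θ j + 2 * (Nsum K n j : ℝ)) (n j) (m j)
       else 0)

/-- `Θ_{i-1} = Σ_{l=i}^K θ_l` (0-indexed: sum of `θ l` for `l ≥ i`). -/
def ThetaGe (K : ℕ) (θ : Fin K → ℝ) (i : Fin (K - 1)) : ℝ :=
  ∑ l ∈ Finset.univ.filter (fun l : Fin K => (i : ℕ) ≤ (l : ℕ)), θ l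

end WrightFisher

section Aux

variable (K' : ℕ)

/-- Derivative of `extendFreq` as a continuous linear map. -/
noncomputable def Dmap (a : Fin (K' + 1)) : (Fin K' → ℝ) →L[ℝ] ℝ :=
  if h : (a : ℕ) < K' then (ContinuousLinearMap.proj ⟨(a : ℕ), h⟩ : (Fin K' → ℝ) →L[ℝ] ℝ)
  else -(∑ j : Fin K', (ContinuousLinearMap.proj j : (Fin K' → ℝ) →L[ℝ] ℝ))

lemma hasFDerivAt_extendFreq (a : Fin (K' + 1)) (x : Fin K' → ℝ) :
    HasFDerivAt (fun y : Fin K' → ℝ => extendFreq (K' + 1) y a) (Dmap K' a) x := by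
  by_cases h : (a : ℕ) < K'
  · have : (fun y : Fin K' → ℝ => extendFreq (K' + 1) y a)
        = fun y => y ⟨(a : ℕ), h⟩ := by
      funext y; simp [extendFreq, h]
    rw [this, Dmap, dif_pos h]
    exact (ContinuousLinearMap.proj (⟨(a : ℕ), h⟩ : Fin K') : (Fin K' → ℝ) →L[ℝ] ℝ).hasFDerivAt
  · have : (fun y : Fin K' → ℝ => extendFreq (K' + 1) y a)
        = fun y => 1 - ∑ j, y j := by
      funext y; simp [extendFreq, h]
    rw [this, Dmap, dif_neg h]
    have hp : ∀ j : Fin K', HasFDerivAt (fun y : Fin K' → ℝ => y j)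
        (ContinuousLinearMap.proj j : (Fin K' → ℝ) →L[ℝ] ℝ) x := fun j =>
      (ContinuousLinearMap.proj j : (Fin K' → ℝ) →L[ℝ] ℝ).hasFDerivAt
    have hs : HasFDerivAt (fun y : Fin K' → ℝ => ∑ j, y j)
        (∑ j : Fin K', (ContinuousLinearMap.proj j : (Fin K' → ℝ) →L[ℝ] ℝ)) x :=
      HasFDerivAt.fun_sum fun j _ => hp j
    simpa using (hasFDerivAt_const (1 : ℝ) x).fun_sub hs

lemma Dmap_single (i : Fin K') (a : Fin (K' + 1)) :
    Dmap K' a (Pi.single i 1) =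
      (if a = idx (K' + 1) i then (1 : ℝ) else 0) - (if a = Fin.last K' then 1 else 0) := by
  have hidx : ((idx (K' + 1) i : Fin (K' + 1)) : ℕ) = (i : ℕ) := rfl
  by_cases h : (a : ℕ) < K'
  · have hne : a ≠ Fin.last K' := by
      intro hh; rw [hh] at h; simp [Fin.last] at h
    rw [Dmap, dif_pos h, if_neg hne]
    have : (⟨(a : ℕ), h⟩ : Fin K') = i ↔ a = idx (K' + 1) i := by
      rw [Fin.ext_iff, Fin.ext_iff, hidx]
    simp [Pi.single_apply, this]
  · have ha : a = Fin.last K' := by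
      apply Fin.ext; have := a.isLt; simp [Fin.last]; omega
    have hne : a ≠ idx (K' + 1) i := by
      rw [ha]; intro hh
      have : (K' : ℕ) = (i : ℕ) := by
        rw [← hidx, ← hh]; rfl
      have := i.isLt; omega
    rw [Dmap, dif_neg h, if_neg hne, if_pos ha]
    simp

lemma pd_exp_meanFit (σ : Fin (K' + 1) → Fin (K' + 1) → ℝ)
    (hσ : ∀ i j, σ i j = σ j i) (x : Fin K' → ℝ) (i : Fin K') :
    pd (K' + 1) (fun y => Real.exp (-meanFit (K' + 1) σ y / 2)) i x =
      Real.exp (-meanFit (K' + 1) σ x / 2) *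
        -(margFit (K' + 1) σ x (idx (K' + 1) i) - margFit (K' + 1) σ x (Fin.last K')) := by
  set E : Fin (K' + 1) → ℝ := fun a => extendFreq (K' + 1) x a with hE
  set M : (Fin K' → ℝ) →L[ℝ] ℝ :=
    ∑ a : Fin (K' + 1), ∑ b : Fin (K' + 1),
      ((σ a b * E a) • Dmap K' b + E b • (σ a b • Dmap K' a)) with hMdef
  have hM : HasFDerivAt (fun y => meanFit (K' + 1) σ y) M x := by
    rw [hMdef]
    simp only [meanFit]
    exact HasFDerivAt.fun_sum fun a _ => HasFDerivAt.fun_sum fun b _ =>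
      ((hasFDerivAt_extendFreq K' a x).const_mul (σ a b)).mul (hasFDerivAt_extendFreq K' b x)
  have h2 : HasFDerivAt (fun y => Real.exp (-meanFit (K' + 1) σ y / 2))
      (Real.exp ((-(1 / 2) : ℝ) * meanFit (K' + 1) σ x) • ((-(1 / 2) : ℝ) • M)) x := by
    have hfun : (fun y => Real.exp (-meanFit (K' + 1) σ y / 2))
        = fun y => Real.exp ((-(1 / 2) : ℝ) * meanFit (K' + 1) σ y) := by
      funext y; congr 1; ring
    rw [hfun]
    exact (hM.const_mul _).exp
  have key : (Real.exp ((-(1 / 2) : ℝ) * meanFit (K' + 1) σ x) • ((-(1 / 2) : ℝ) • M))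
      (Pi.single i 1 : Fin K' → ℝ)
      = Real.exp (-meanFit (K' + 1) σ x / 2) *
        -(margFit (K' + 1) σ x (idx (K' + 1) i) - margFit (K' + 1) σ x (Fin.last K')) := by
    have hMe : M (Pi.single i 1) =
      2 * (margFit (K' + 1) σ x (idx (K' + 1) i) - margFit (K' + 1) σ x (Fin.last K')) := by
      have hsum : ∀ g : Fin (K' + 1) → ℝ,
          (∑ b, g b * ((if b = idx (K' + 1) i then (1 : ℝ) else 0)
            - (if b = Fin.last K' then 1 else 0)))
          = g (idx (K' + 1) i) - g (Fin.last K') := by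
        intro g
        simp [mul_sub, Finset.sum_sub_distrib, mul_ite, mul_one, mul_zero,
          Finset.sum_ite_eq']
      rw [hMdef]
      simp only [ContinuousLinearMap.sum_apply, ContinuousLinearMap.add_apply,
        ContinuousLinearMap.smul_apply, smul_eq_mul, Dmap_single]
      have step : ∀ a : Fin (K' + 1),
          (∑ b, (σ a b * E a * ((if b = idx (K' + 1) i then (1 : ℝ) else 0)
              - (if b = Fin.last K' then 1 else 0))
            + E b * (σ a b * ((if a = idx (K' + 1) i then (1 : ℝ) else 0)
              - (if a = Fin.last K' then 1 else 0)))))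
          = (σ a (idx (K' + 1) i) * E a - σ a (Fin.last K') * E a)
            + (∑ b, E b * σ a b) * ((if a = idx (K' + 1) i then (1 : ℝ) else 0)
              - (if a = Fin.last K' then 1 else 0)) := by
        intro a
        rw [Finset.sum_add_distrib, hsum (fun b => σ a b * E a)]
        congr 1
        rw [Finset.sum_mul]
        exact Finset.sum_congr rfl fun b _ => by ring
      rw [Finset.sum_congr rfl (fun a _ => step a), Finset.sum_add_distrib,
        Finset.sum_sub_distrib, hsum (fun a => (∑ b, E b * σ a b))]
      have hmf : ∀ c, margFit (K' + 1) σ x c = ∑ b, σ c b * E b := fun c => rfl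
      have h1 : ∑ a, σ a (idx (K' + 1) i) * E a = margFit (K' + 1) σ x (idx (K' + 1) i) := by
        rw [hmf]; exact Finset.sum_congr rfl fun a _ => by rw [hσ]
      have h1' : ∑ a, σ a (Fin.last K') * E a = margFit (K' + 1) σ x (Fin.last K') := by
        rw [hmf]; exact Finset.sum_congr rfl fun a _ => by rw [hσ]
      have h2a : ∑ b, E b * σ (idx (K' + 1) i) b = margFit (K' + 1) σ x (idx (K' + 1) i) := by
        rw [hmf]; exact Finset.sum_congr rfl fun b _ => by ring
      have h2b : ∑ b, E b * σ (Fin.last K') b = margFit (K' + 1) σ x (Fin.last K') := by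
        rw [hmf]; exact Finset.sum_congr rfl fun b _ => by ring
      rw [h1, h1', h2a, h2b]; ring
    simp only [ContinuousLinearMap.smul_apply, smul_eq_mul]
    rw [hMe]
    rw [show (-(1 / 2) : ℝ) * meanFit (K' + 1) σ x = -meanFit (K' + 1) σ x / 2 from by ring]
    ring
  rw [pd, h2.fderiv]
  exact key

lemma cancel_algebra (n : ℕ) (x P s : Fin n → ℝ) (e L S X : ℝ)
    (hA : ∑ i, x i * s i = S - X * L)
    (hB : ∑ i, x i = 1 - X) :
    (∑ i, ∑ j, x i * ((if i = j then (1 : ℝ) else 0) - x j) * (e * -(s i - L)) * P j)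
      + e * ∑ i, x i * (s i - S) * P i = 0 := by
  have expand : (∑ i, ∑ j, x i * ((if i = j then (1 : ℝ) else 0) - x j)
        * (e * -(s i - L)) * P j)
      = ∑ i, x i * (e * -(s i - L)) * P i
        - (∑ i, x i * (e * -(s i - L))) * (∑ j, x j * P j) := by
    have step : ∀ i : Fin n, (∑ j, x i * ((if i = j then (1 : ℝ) else 0) - x j)
          * (e * -(s i - L)) * P j)
        = x i * (e * -(s i - L)) * P i - ∑ j, x i * x j * (e * -(s i - L)) * P j := by
      intro i
      have h0 : ∀ j : Fin n, x i * ((if i = j then (1 : ℝ) else 0) - x j)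
            * (e * -(s i - L)) * P j
          = (if j = i then x i * (e * -(s i - L)) * P j else 0)
            - x i * x j * (e * -(s i - L)) * P j := by
        intro j
        by_cases h : i = j
        · subst h
          simp only [eq_self_iff_true, if_true]
          ring
        · have h' : ¬ j = i := fun hh => h hh.symm
          simp only [if_neg h, if_neg h']
          ring
      rw [Finset.sum_congr rfl fun j _ => h0 j, Finset.sum_sub_distrib,
        Finset.sum_ite_eq' Finset.univ i (fun j => x i * (e * -(s i - L)) * P j),
        if_pos (Finset.mem_univ i)]
    rw [Finset.sum_congr rfl fun i _ => step i, Finset.sum_sub_distrib]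
    congr 1
    rw [Finset.sum_mul_sum]
    exact Finset.sum_congr rfl fun i _ => Finset.sum_congr rfl fun j _ => by ring
  have e1 : ∑ i, x i * (e * -(s i - L)) * P i
      = -e * ((∑ i, x i * s i * P i) - L * ∑ i, x i * P i) :=
    calc ∑ i, x i * (e * -(s i - L)) * P i
        = ∑ i, ((-e) * (x i * s i * P i) + (e * L) * (x i * P i)) :=
          Finset.sum_congr rfl fun i _ => by ring
      _ = (-e) * (∑ i, x i * s i * P i) + (e * L) * (∑ i, x i * P i) := by
          rw [Finset.sum_add_distrib, Finset.mul_sum, Finset.mul_sum]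
      _ = -e * ((∑ i, x i * s i * P i) - L * ∑ i, x i * P i) := by ring
  have e2 : ∑ i, x i * (e * -(s i - L))
      = -e * ((∑ i, x i * s i) - L * ∑ i, x i) :=
    calc ∑ i, x i * (e * -(s i - L))
        = ∑ i, ((-e) * (x i * s i) + (e * L) * (x i)) :=
          Finset.sum_congr rfl fun i _ => by ring
      _ = (-e) * (∑ i, x i * s i) + (e * L) * (∑ i, x i) := by
          rw [Finset.sum_add_distrib, Finset.mul_sum, Finset.mul_sum]
      _ = -e * ((∑ i, x i * s i) - L * ∑ i, x i) := by ring
  have e3 : ∑ i, x i * (s i - S) * P i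
      = (∑ i, x i * s i * P i) - S * ∑ i, x i * P i :=
    calc ∑ i, x i * (s i - S) * P i
        = ∑ i, (x i * s i * P i + (-S) * (x i * P i)) :=
          Finset.sum_congr rfl fun i _ => by ring
      _ = (∑ i, x i * s i * P i) + (-S) * (∑ i, x i * P i) := by
          rw [Finset.sum_add_distrib, Finset.mul_sum]
      _ = (∑ i, x i * s i * P i) - S * ∑ i, x i * P i := by ring
  rw [expand, e1, e2, e3, hA, hB]
  ring

end Aux

/-- Appendix D, cancellation identity: for any `C¹` function `f` on the
interior of the simplex, the cross term between the diffusion coefficient applied to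
`e^{-σ̄/2}` and `f` cancels the selection drift term. -/
theorem cross_term_cancellation (K : ℕ) (hK : 2 ≤ K) (σ : Fin K → Fin K → ℝ)
    (hσ : ∀ i j, σ i j = σ j i) (hσK : σ ⟨K - 1, by omega⟩ ⟨K - 1, by omega⟩ = 0)
    (f : (Fin (K - 1) → ℝ) → ℝ) (hf : ContDiffOn ℝ 1 f (simplexInt K))
    (x : Fin (K - 1) → ℝ) (hx : x ∈ simplexInt K) :
    (∑ i, ∑ j, x i * ((if i = j then (1 : ℝ) else 0) - x j) *
        pd K (fun y => Real.exp (-meanFit K σ y / 2)) i x * pd K f j x) +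
      Real.exp (-meanFit K σ x / 2) *
        ∑ i, x i * (margFit K σ x (idx K i) - meanFit K σ x) * pd K f i x = 0 := by
  obtain ⟨K', rfl⟩ : ∃ K', K = K' + 1 := ⟨K - 1, by omega⟩
  have hpd : ∀ i : Fin K',
      pd (K' + 1) (fun y => Real.exp (-meanFit (K' + 1) σ y / 2)) i x
        = Real.exp (-meanFit (K' + 1) σ x / 2) *
          -(margFit (K' + 1) σ x (idx (K' + 1) i) - margFit (K' + 1) σ x (Fin.last K')) :=
    fun i => pd_exp_meanFit K' σ hσ x i
  simp only [hpd]
  refine cancel_algebra K' x (fun j => pd (K' + 1) f j x)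
      (fun i => margFit (K' + 1) σ x (idx (K' + 1) i))
      (Real.exp (-meanFit (K' + 1) σ x / 2)) (margFit (K' + 1) σ x (Fin.last K'))
      (meanFit (K' + 1) σ x) (extendFreq (K' + 1) x (Fin.last K')) ?_ ?_
  · -- ∑ x i * margFit (idx i) = meanFit - E_last * margFit last
    have hEc : ∀ c : Fin K', extendFreq (K' + 1) x (idx (K' + 1) c) = x c := by
      intro c
      rw [extendFreq, dif_pos (show ((idx (K' + 1) c : Fin (K' + 1)) : ℕ) < K' + 1 - 1
        from c.isLt)]
      rfl
    have hcast : ∀ c : Fin K', Fin.castSucc c = idx (K' + 1) c := fun c => rfl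
    have hmean : meanFit (K' + 1) σ x
        = ∑ a : Fin (K' + 1), extendFreq (K' + 1) x a * margFit (K' + 1) σ x a := by
      simp only [meanFit, margFit]
      refine Finset.sum_congr rfl fun a _ => ?_
      rw [Finset.mul_sum]
      exact Finset.sum_congr rfl fun b _ => by ring
    rw [hmean, Fin.sum_univ_castSucc]
    simp only [hcast, hEc]
    ring
  · -- ∑ x i = 1 - E_last
    have h : ¬ ((Fin.last K' : Fin (K' + 1)) : ℕ) < K' + 1 - 1 := by simp [Fin.last]
    rw [extendFreq, dif_neg h]
    have hco : (∑ j : Fin (K' + 1 - 1), x j) = ∑ i : Fin K', x i := rfl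
    rw [hco]
    ring
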